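/- The sequence of incomplete Beta function values I_{1/2}(1/(δ−2), (δ−1)/(δ−2)) converges to 1 as δ → ∞, where I_x(α, β) = (Γ(α+β)/(Γ(α)Γ(β))) ∫_0^x y^{α−1}(1−y)^{β−1} dy. -/

import Mathlib

/-- Regularized incomplete Beta function
`I_x(α, β) = (Γ(α+β)/(Γ(α)Γ(β))) ∫_0^x y^{α−1}(1−y)^{β−1} dy`. -/
noncomputable def regIncBeta (x α β : ℝ) : ℝ :=
  (Real.Gamma (α + β) / (Real.Gamma α * Real.Gamma β)) *
    ∫ y in (0 : ℝ)..x, y ^ (α - 1) * (1 - y) ^ (β - 1)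

open Real Filter intervalIntegral in
lemma regIncBeta_sandwich {α : ℝ} (h0 : 0 < α) (h1 : α ≤ 1) :
    Gamma (1 + 2*α) / Gamma (1 + α) ^ 2 * (2⁻¹ : ℝ) ^ (2*α) ≤ regIncBeta (1/2) α (1 + α) ∧
    regIncBeta (1/2) α (1 + α) ≤ Gamma (1 + 2*α) / Gamma (1 + α) ^ 2 * (2⁻¹ : ℝ) ^ α := by
  have hle : (0:ℝ) ≤ 1/2 := by norm_num
  have hGa : Gamma α = Gamma (1 + α) / α := by
    rw [add_comm, Real.Gamma_add_one h0.ne']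
    field_simp
  have hpos1 : 0 < Gamma (1 + α) := Gamma_pos_of_pos (by linarith)
  have hpos2 : 0 < Gamma (1 + 2*α) := Gamma_pos_of_pos (by linarith)
  -- integrability
  have hint_pow : IntervalIntegrable (fun y : ℝ => y ^ (α - 1)) MeasureTheory.volume 0 (1/2) :=
    intervalIntegrable_rpow' (by linarith)
  have hcont : ContinuousOn (fun y : ℝ => (1 - y) ^ α) (Set.uIcc (0:ℝ) (1/2)) := by
    apply ContinuousOn.rpow_const (by fun_prop)
    intro y _
    exact Or.inr h0.le
  have hint : IntervalIntegrable (fun y : ℝ => y ^ (α - 1) * (1 - y) ^ α)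
      MeasureTheory.volume 0 (1/2) := hint_pow.mul_continuousOn hcont
  have hint_lo : IntervalIntegrable (fun y : ℝ => y ^ (α - 1) * (2⁻¹:ℝ) ^ α)
      MeasureTheory.volume 0 (1/2) := hint_pow.mul_const _
  -- base integral value
  have hbase : (∫ y in (0:ℝ)..(1/2), y ^ (α - 1)) = (2⁻¹:ℝ) ^ α / α := by
    rw [integral_rpow (Or.inl (by linarith))]
    rw [sub_add_cancel, Real.zero_rpow h0.ne']
    norm_num
  -- lower bound on the integral
  have hlow : (2⁻¹:ℝ) ^ α * ((2⁻¹:ℝ) ^ α / α) ≤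
      ∫ y in (0:ℝ)..(1/2), y ^ (α - 1) * (1 - y) ^ α := by
    have : (∫ y in (0:ℝ)..(1/2), y ^ (α - 1) * (2⁻¹:ℝ) ^ α) ≤
        ∫ y in (0:ℝ)..(1/2), y ^ (α - 1) * (1 - y) ^ α := by
      apply integral_mono_on hle hint_lo hint
      intro y hy
      have hy2 : y ≤ 1/2 := hy.2
      apply mul_le_mul_of_nonneg_left _ (Real.rpow_nonneg hy.1 _)
      exact Real.rpow_le_rpow (by norm_num) (by linarith) h0.le
    calc (2⁻¹:ℝ) ^ α * ((2⁻¹:ℝ) ^ α / α)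
        = (∫ y in (0:ℝ)..(1/2), y ^ (α - 1)) * (2⁻¹:ℝ) ^ α := by rw [hbase]; ring
      _ = ∫ y in (0:ℝ)..(1/2), y ^ (α - 1) * (2⁻¹:ℝ) ^ α := (integral_mul_const _ _).symm
      _ ≤ _ := this
  -- upper bound on the integral
  have hhigh : (∫ y in (0:ℝ)..(1/2), y ^ (α - 1) * (1 - y) ^ α) ≤ (2⁻¹:ℝ) ^ α / α := by
    rw [← hbase]
    apply integral_mono_on hle hint hint_pow
    intro y hy
    have : (1 - y) ^ α ≤ 1 :=
      Real.rpow_le_one (by linarith [hy.2]) (by linarith [hy.1]) h0.le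
    calc y ^ (α - 1) * (1 - y) ^ α ≤ y ^ (α - 1) * 1 :=
          mul_le_mul_of_nonneg_left this (Real.rpow_nonneg hy.1 _)
      _ = y ^ (α - 1) := mul_one _
  -- prefactor
  have hC : Gamma (α + (1 + α)) / (Gamma α * Gamma (1 + α)) =
      α * Gamma (1 + 2*α) / Gamma (1 + α) ^ 2 := by
    rw [hGa, show α + (1 + α) = 1 + 2*α by ring]
    field_simp
  have hCpos : 0 < α * Gamma (1 + 2*α) / Gamma (1 + α) ^ 2 := by positivity
  have hEq : regIncBeta (1/2) α (1 + α) =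
      (α * Gamma (1 + 2*α) / Gamma (1 + α) ^ 2) *
        ∫ y in (0:ℝ)..(1/2), y ^ (α - 1) * (1 - y) ^ α := by
    unfold regIncBeta
    rw [hC, show (1 + α) - 1 = α by ring]
  constructor
  · rw [hEq]
    calc Gamma (1 + 2*α) / Gamma (1 + α) ^ 2 * (2⁻¹:ℝ) ^ (2*α)
        = (α * Gamma (1 + 2*α) / Gamma (1 + α) ^ 2) * ((2⁻¹:ℝ) ^ α * ((2⁻¹:ℝ) ^ α / α)) := by
          rw [show (2:ℝ)*α = α + α by ring, Real.rpow_add (by norm_num)]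
          field_simp
      _ ≤ _ := mul_le_mul_of_nonneg_left hlow hCpos.le
  · rw [hEq]
    calc (α * Gamma (1 + 2*α) / Gamma (1 + α) ^ 2) *
          ∫ y in (0:ℝ)..(1/2), y ^ (α - 1) * (1 - y) ^ α
        ≤ (α * Gamma (1 + 2*α) / Gamma (1 + α) ^ 2) * ((2⁻¹:ℝ) ^ α / α) :=
          mul_le_mul_of_nonneg_left hhigh hCpos.le
      _ = Gamma (1 + 2*α) / Gamma (1 + α) ^ 2 * (2⁻¹:ℝ) ^ α := by
          field_simp

open Real Filter in
lemma gamma_bound_tendsto (c d : ℝ) :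
    Tendsto (fun α : ℝ => Gamma (1 + c*α) / Gamma (1 + α) ^ 2 * (2⁻¹ : ℝ) ^ (d*α))
      (nhds 0) (nhds 1) := by
  have hG : ContinuousAt Gamma 1 := by
    apply (Real.differentiableAt_Gamma ?_).continuousAt
    intro m h
    have : (0:ℝ) ≤ m := Nat.cast_nonneg m
    linarith
  have h1 : Tendsto (fun α : ℝ => 1 + c*α) (nhds 0) (nhds 1) := by
    have hc : Continuous (fun α : ℝ => 1 + c*α) := by continuity
    simpa using hc.tendsto 0
  have h2 : Tendsto (fun α : ℝ => 1 + α) (nhds 0) (nhds 1) := by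
    have hc : Continuous (fun α : ℝ => 1 + α) := by continuity
    simpa using hc.tendsto 0
  have hGc : Tendsto (fun α : ℝ => Gamma (1 + c*α)) (nhds 0) (nhds 1) := by
    simpa [Real.Gamma_one, Function.comp_def] using hG.tendsto.comp h1
  have hGd : Tendsto (fun α : ℝ => Gamma (1 + α) ^ 2) (nhds 0) (nhds 1) := by
    have := (hG.tendsto.comp h2).pow 2
    simpa [Real.Gamma_one] using this
  have hr : Tendsto (fun α : ℝ => (2⁻¹:ℝ) ^ (d*α)) (nhds 0) (nhds 1) := by
    have hrw : (fun α : ℝ => (2⁻¹:ℝ) ^ (d*α)) = fun α : ℝ => Real.exp (Real.log 2⁻¹ * (d*α)) := by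
      funext α
      rw [Real.rpow_def_of_pos (by norm_num)]
    rw [hrw]
    have hc : Continuous (fun α : ℝ => Real.exp (Real.log 2⁻¹ * (d*α))) := by continuity
    simpa using hc.tendsto 0
  have := (hGc.div hGd (by norm_num)).mul hr
  simpa using this

/-- `I_{1/2}(1/(δ−2), (δ−1)/(δ−2)) → 1` as `δ → ∞`. -/
theorem incBeta_tendsto_one :
    Filter.Tendsto
      (fun δ : ℕ => regIncBeta (1 / 2) (1 / ((δ : ℝ) - 2)) (((δ : ℝ) - 1) / ((δ : ℝ) - 2)))
      Filter.atTop (nhds 1) := by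
  set a : ℕ → ℝ := fun δ => 1 / ((δ : ℝ) - 2) with ha
  have ha0 : Filter.Tendsto a Filter.atTop (nhds 0) := by
    simp only [ha, one_div]
    exact tendsto_inv_atTop_zero.comp
      (Filter.tendsto_atTop_add_const_right _ _ tendsto_natCast_atTop_atTop)
  have hev : ∀ᶠ δ : ℕ in Filter.atTop, 0 < a δ ∧ a δ ≤ 1 ∧
      ((δ:ℝ) - 1) / ((δ:ℝ) - 2) = 1 + a δ := by
    filter_upwards [Filter.eventually_ge_atTop 3] with δ hδ
    have h3 : (3:ℝ) ≤ (δ:ℝ) := by exact_mod_cast hδ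
    have hpos : (0:ℝ) < (δ:ℝ) - 2 := by linarith
    refine ⟨by positivity, ?_, ?_⟩
    · rw [ha]
      rw [div_le_one hpos]
      linarith
    · rw [ha]
      field_simp
      ring
  have hlow : Filter.Tendsto
      (fun δ : ℕ => Real.Gamma (1 + 2 * a δ) / Real.Gamma (1 + a δ) ^ 2 * (2⁻¹:ℝ) ^ (2 * a δ))
      Filter.atTop (nhds 1) := (gamma_bound_tendsto 2 2).comp ha0
  have hhigh : Filter.Tendsto
      (fun δ : ℕ => Real.Gamma (1 + 2 * a δ) / Real.Gamma (1 + a δ) ^ 2 * (2⁻¹:ℝ) ^ (a δ))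
      Filter.atTop (nhds 1) := by
    have := (gamma_bound_tendsto 2 1).comp ha0
    simpa only [Function.comp_def, one_mul] using this
  apply tendsto_of_tendsto_of_tendsto_of_le_of_le' hlow hhigh
  · filter_upwards [hev] with δ ⟨h0, h1, heq⟩
    rw [heq]
    exact (regIncBeta_sandwich h0 h1).1
  · filter_upwards [hev] with δ ⟨h0, h1, heq⟩
    rw [heq]
    exact (regIncBeta_sandwich h0 h1).2
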